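/- Let T ≥ 1 be a natural number, let P be a PMF on {0,…,T−1}, and let B be any binning of P. Then the bit cost of B satisfies Ĥ ≥ H, where H is the Shannon entropy of P. In other words, the Shannon entropy is a lower bound on the binned bit cost for every choice of bins. -/

import Mathlib

open Finset

/-- The weight of a bin `[p.1, p.2]` with respect to the mass function `P`. -/
noncomputable def binWeight (P : ℕ → ℝ) (p : ℕ × ℕ) : ℝ :=
  ∑ x ∈ Finset.Icc p.1 p.2, P x

/-- The bit cost of a binning `B` with respect to the mass function `P`:
`Σ_i w_i (log₂ T_i − log₂ w_i)`, where `w_i = 0` terms vanish since `logb 2 0 = 0`. -/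
noncomputable def bitCost (P : ℕ → ℝ) (B : Finset (ℕ × ℕ)) : ℝ :=
  ∑ p ∈ B, binWeight P p *
    (Real.logb 2 ((p.2 - p.1 + 1 : ℕ) : ℝ) - Real.logb 2 (binWeight P p))

/-- The Shannon entropy of `P` on `{0, …, T−1}`, with the convention `0 · log₂ 0 = 0`. -/
noncomputable def shannonEntropy (P : ℕ → ℝ) (T : ℕ) : ℝ :=
  ∑ x ∈ Finset.range T, -(P x * Real.logb 2 (P x))

/-- `B` is a binning of `P` over the domain `{0, …, T−1}`: a finite family of
pairwise disjoint integer intervals `[a, b] ⊆ {0, …, T−1}` covering the support of `P`. -/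
def IsBinning (P : ℕ → ℝ) (T : ℕ) (B : Finset (ℕ × ℕ)) : Prop :=
  (∀ p ∈ B, p.1 ≤ p.2 ∧ p.2 < T) ∧
  (∀ p ∈ B, ∀ q ∈ B, p ≠ q → Disjoint (Finset.Icc p.1 p.2) (Finset.Icc q.1 q.2)) ∧
  (∀ x < T, P x ≠ 0 → ∃ p ∈ B, x ∈ Finset.Icc p.1 p.2)


lemma bin_lemma (P : ℕ → ℝ) (hP0 : ∀ x, 0 ≤ P x) (a b : ℕ) (hab : a ≤ b) :
    (∑ x ∈ Finset.Icc a b, -(P x * Real.logb 2 (P x))) ≤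
    (∑ x ∈ Finset.Icc a b, P x) *
      (Real.logb 2 ((b - a + 1 : ℕ) : ℝ) - Real.logb 2 (∑ x ∈ Finset.Icc a b, P x)) := by
  set w : ℝ := ∑ x ∈ Finset.Icc a b, P x with hw
  have hcard : (Finset.Icc a b).card = b - a + 1 := by
    rw [Nat.card_Icc]; omega
  have hn1 : (1 : ℕ) ≤ b - a + 1 := by omega
  set n : ℝ := ((b - a + 1 : ℕ) : ℝ) with hn
  have hnpos : (0:ℝ) < n := by rw [hn]; exact_mod_cast Nat.succ_le_iff.mp hn1
  have hwnn : 0 ≤ w := Finset.sum_nonneg fun x _ => hP0 x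
  rcases eq_or_lt_of_le hwnn with hw0 | hwpos
  · have hz : ∀ x ∈ Finset.Icc a b, P x = 0 := by
      intro x hx
      exact (Finset.sum_eq_zero_iff_of_nonneg (fun x _ => hP0 x)).1 hw0.symm x hx
    rw [← hw0]
    simp only [zero_mul]
    apply le_of_eq
    apply Finset.sum_eq_zero
    intro x hx; rw [hz x hx]; simp
  · have hlog2 : (0:ℝ) < Real.log 2 := Real.log_pos (by norm_num)
    have key : ∀ x ∈ Finset.Icc a b,
        -(P x * Real.logb 2 (P x)) ≤
          P x * (Real.logb 2 n - Real.logb 2 w) + (w / n - P x) / Real.log 2 := by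
      intro x _
      rcases eq_or_lt_of_le (hP0 x) with h0 | hpx
      · rw [← h0]
        simp only [zero_mul, neg_zero, mul_zero, sub_zero, zero_add]
        positivity
      · have hratio : (0:ℝ) < w / (n * P x) := by positivity
        have hlogle := Real.log_le_sub_one_of_pos hratio
        have heq : Real.logb 2 w - Real.logb 2 n - Real.logb 2 (P x)
            = Real.log (w / (n * P x)) / Real.log 2 := by
          rw [Real.log_div (ne_of_gt hwpos) (by positivity),
            Real.log_mul (ne_of_gt hnpos) (ne_of_gt hpx)]
          simp only [Real.logb]
          ring
        have h1 : P x * (Real.logb 2 w - Real.logb 2 n - Real.logb 2 (P x))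
            ≤ P x * ((w / (n * P x) - 1) / Real.log 2) := by
          rw [heq]
          exact mul_le_mul_of_nonneg_left
            (div_le_div_of_nonneg_right hlogle hlog2.le) (le_of_lt hpx)
        have h2 : P x * ((w / (n * P x) - 1) / Real.log 2) = (w / n - P x) / Real.log 2 := by
          field_simp
        nlinarith [h1]
    have hs : ∑ x ∈ Finset.Icc a b, (w / n - P x) = 0 := by
      rw [Finset.sum_sub_distrib, Finset.sum_const, hcard, ← hw, nsmul_eq_mul, ← hn]
      field_simp
      ring
    calc (∑ x ∈ Finset.Icc a b, -(P x * Real.logb 2 (P x)))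
        ≤ ∑ x ∈ Finset.Icc a b,
            (P x * (Real.logb 2 n - Real.logb 2 w) + (w / n - P x) / Real.log 2) :=
          Finset.sum_le_sum key
      _ = w * (Real.logb 2 n - Real.logb 2 w) := by
          rw [Finset.sum_add_distrib, ← Finset.sum_mul, ← Finset.sum_div, hs, ← hw]
          simp

/-- The Shannon entropy is a lower bound on the binned bit cost, for every binning. -/
theorem bitCost_ge_entropy
    (T : ℕ) (hT : 1 ≤ T)
    (P : ℕ → ℝ) (hP0 : ∀ x, 0 ≤ P x) (hPsum : ∑ x ∈ Finset.range T, P x = 1)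
    (B : Finset (ℕ × ℕ)) (hB : IsBinning P T B) :
    bitCost P B ≥ shannonEntropy P T := by
  obtain ⟨hsub, hdisj, hcov⟩ := hB
  have step : ∀ p ∈ B, ∑ x ∈ Finset.Icc p.1 p.2, -(P x * Real.logb 2 (P x)) ≤
      binWeight P p * (Real.logb 2 ((p.2 - p.1 + 1 : ℕ) : ℝ) - Real.logb 2 (binWeight P p)) :=
    fun p hp => bin_lemma P hP0 p.1 p.2 (hsub p hp).1
  have h2 : ∑ p ∈ B, ∑ x ∈ Finset.Icc p.1 p.2, -(P x * Real.logb 2 (P x)) ≤ bitCost P B :=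
    Finset.sum_le_sum step
  have hpd : Set.PairwiseDisjoint (↑B) (fun p : ℕ × ℕ => Finset.Icc p.1 p.2) :=
    fun p hp q hq hpq => hdisj p hp q hq hpq
  have h3 : ∑ x ∈ B.biUnion (fun p => Finset.Icc p.1 p.2), -(P x * Real.logb 2 (P x))
      = ∑ p ∈ B, ∑ x ∈ Finset.Icc p.1 p.2, -(P x * Real.logb 2 (P x)) :=
    Finset.sum_biUnion hpd
  have hU : B.biUnion (fun p => Finset.Icc p.1 p.2) ⊆ Finset.range T := by
    intro x hx
    rw [Finset.mem_biUnion] at hx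
    obtain ⟨p, hp, hxp⟩ := hx
    rw [Finset.mem_Icc] at hxp
    exact Finset.mem_range.mpr (lt_of_le_of_lt hxp.2 (hsub p hp).2)
  have h4 : ∑ x ∈ B.biUnion (fun p => Finset.Icc p.1 p.2), -(P x * Real.logb 2 (P x))
      = ∑ x ∈ Finset.range T, -(P x * Real.logb 2 (P x)) := by
    apply Finset.sum_subset hU
    intro x hx hnx
    have hPx : P x = 0 := by
      by_contra h
      obtain ⟨p, hp, hxp⟩ := hcov x (Finset.mem_range.mp hx) h
      exact hnx (Finset.mem_biUnion.mpr ⟨p, hp, hxp⟩)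
    rw [hPx]; simp
  rw [shannonEntropy, ← h4, h3]
  exact h2
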